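/- arXiv:2603.28223 — 4 statements merged into one kernel-verified Lean document; each statement's English description precedes it below -/
import Mathlib

section
/- Fix q > 2 and α > −1. For every ρ ∈ (0, q−1) there exists a constant c > 0 (depending only on α, q, ρ) such that for every integer n ≥ 1, ‖ℓ_n^α‖_{L^q(μ_α)} ≥ c · ρ^n · n^{α/2}. -/
open MeasureTheory Filter Real
open scoped ENNReal NNReal

/-- The Gamma probability measure on (0,∞) with density `Γ(α+1)^{-1} x^α e^{-x}`. -/
noncomputable def muAlpha (α : ℝ) : Measure ℝ :=
  MeasureTheory.volume.withDensity (fun x =>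
    ENNReal.ofReal (Set.indicator (Set.Ioi (0:ℝ))
      (fun y => (Real.Gamma (α+1))⁻¹ * y ^ α * Real.exp (-y)) x))

/-- The Laguerre polynomials
`L_n^α(x) = Σ_{k=0}^n (−1)^k Γ(n+α+1)/(Γ(k+α+1)(n−k)! k!) x^k`. -/
noncomputable def laguerre (α : ℝ) (n : ℕ) (x : ℝ) : ℝ :=
  ∑ k ∈ Finset.range (n+1),
    (-1:ℝ)^k * (Real.Gamma (n+α+1) / (Real.Gamma (k+α+1) * (n-k).factorial * k.factorial)) * x^k

/-- The `L²(μ_α)`-normalized Laguerre polynomials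
`ℓ_n^α = (n! Γ(α+1)/Γ(n+α+1))^{1/2} L_n^α`. -/
noncomputable def laguerreL2 (α : ℝ) (n : ℕ) (x : ℝ) : ℝ :=
  Real.sqrt (n.factorial * Real.Gamma (α+1) / Real.Gamma (n+α+1)) * laguerre α n x

noncomputable def wA (α x : ℝ) : ℝ := (Real.Gamma (α+1))⁻¹ * x ^ α * Real.exp (-x)

lemma measurable_wA {α : ℝ} : Measurable (wA α) := by
  unfold wA; fun_prop

lemma wA_nonneg {α : ℝ} (hα : -1 < α) {x : ℝ} (hx : (0:ℝ) < x) : 0 ≤ wA α x := by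
  unfold wA
  exact mul_nonneg (mul_nonneg (inv_nonneg.2 (Real.Gamma_pos_of_pos (by linarith)).le) (Real.rpow_nonneg hx.le α)) (Real.exp_pos _).le

lemma muAlpha_eq (α : ℝ) : muAlpha α
    = MeasureTheory.volume.withDensity (fun x =>
      ((Set.indicator (Set.Ioi (0:ℝ)) (wA α) x).toNNReal : ℝ≥0∞)) := rfl

lemma integral_muAlpha {α : ℝ} (hα : -1 < α) (f : ℝ → ℝ) :
    ∫ x, f x ∂(muAlpha α) = ∫ x in Set.Ioi 0, f x * wA α x := by
  rw [muAlpha_eq,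
    integral_withDensity_eq_integral_smul
      (measurable_wA.indicator measurableSet_Ioi).real_toNNReal f,
    ← integral_indicator measurableSet_Ioi]
  congr 1
  ext x
  by_cases hx : x ∈ Set.Ioi (0:ℝ)
  · rw [Set.indicator_of_mem hx, Set.indicator_of_mem hx,
      NNReal.smul_def, Real.coe_toNNReal _ (wA_nonneg hα hx), smul_eq_mul]
    ring
  · rw [Set.indicator_of_notMem hx, Set.indicator_of_notMem hx]
    simp

lemma integrable_muAlpha {α : ℝ} (hα : -1 < α) {f : ℝ → ℝ}
    (h : IntegrableOn (fun x => f x * wA α x) (Set.Ioi 0)) :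
    Integrable f (muAlpha α) := by
  rw [muAlpha_eq]
  rw [integrable_withDensity_iff
    ((measurable_wA.indicator measurableSet_Ioi).real_toNNReal.coe_nnreal_ennreal)
    (Filter.Eventually.of_forall fun x => ENNReal.coe_lt_top)]
  have : (fun x => f x * ((((Set.indicator (Set.Ioi (0:ℝ)) (wA α) x).toNNReal : ℝ≥0∞)).toReal))
      = Set.indicator (Set.Ioi 0) (fun x => f x * wA α x) := by
    ext x
    by_cases hx : x ∈ Set.Ioi (0:ℝ)
    · rw [Set.indicator_of_mem hx, Set.indicator_of_mem hx]
      simp [Real.coe_toNNReal _ (wA_nonneg hα hx)]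
    · rw [Set.indicator_of_notMem hx, Set.indicator_of_notMem hx]
      simp
  rw [this, integrable_indicator_iff measurableSet_Ioi]
  exact h

lemma integrableOn_momentW {α : ℝ} (hα : -1 < α) (k : ℕ) {s : ℝ} (hs : s < 1) :
    IntegrableOn (fun x => (x^k * Real.exp (s*x)) * wA α x) (Set.Ioi 0) := by
  have h0 : IntegrableOn (fun x : ℝ => x ^ ((k:ℝ)+α) * Real.exp (-(1-s) * x ^ (1:ℝ)))
      (Set.Ioi 0) :=
    integrableOn_rpow_mul_exp_neg_mul_rpow (by linarith [Nat.cast_nonneg (α := ℝ) k])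
      zero_lt_one (by linarith)
  have h1 : IntegrableOn
      (fun x : ℝ => (Real.Gamma (α+1))⁻¹ * (x ^ ((k:ℝ)+α) * Real.exp (-(1-s) * x)))
      (Set.Ioi 0) := by
    refine ((h0.congr_fun (fun x hx => ?_) measurableSet_Ioi)).const_mul _
    rw [Real.rpow_one]
  refine h1.congr_fun (fun x hx => ?_) measurableSet_Ioi
  have hx : (0:ℝ) < x := hx
  have hxk : (x:ℝ)^k = x^(k:ℝ) := (Real.rpow_natCast x k).symm
  have hsplit : x ^ ((k:ℝ)+α) = x^(k:ℝ) * x^α := Real.rpow_add hx _ _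
  have hexp : Real.exp (-(1-s) * x) = Real.exp (s*x) * Real.exp (-x) := by
    rw [← Real.exp_add]; ring_nf
  simp only [wA, hsplit, hexp, ← hxk]
  ring

lemma integrable_moment {α : ℝ} (hα : -1 < α) (k : ℕ) {s : ℝ} (hs : s < 1) :
    Integrable (fun x => x^k * Real.exp (s*x)) (muAlpha α) :=
  integrable_muAlpha hα (integrableOn_momentW hα k hs)

lemma integral_moment {α : ℝ} (hα : -1 < α) (k : ℕ) {s : ℝ} (hs : s < 1) :
    ∫ x, x^k * Real.exp (s*x) ∂(muAlpha α)
      = (Real.Gamma (α+1))⁻¹ * ((1/(1-s)) ^ ((k:ℝ)+α+1) * Real.Gamma ((k:ℝ)+α+1)) := by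
  rw [integral_muAlpha hα]
  have hcong : ∀ x ∈ Set.Ioi (0:ℝ), (x^k * Real.exp (s*x)) * wA α x
      = (Real.Gamma (α+1))⁻¹ * (x ^ (((k:ℝ)+α+1)-1) * Real.exp (-((1-s) * x))) := by
    intro x hx
    have hx : (0:ℝ) < x := hx
    have hxk : (x:ℝ)^k = x^(k:ℝ) := (Real.rpow_natCast x k).symm
    have hsplit : x ^ (((k:ℝ)+α+1)-1) = x^(k:ℝ) * x^α := by
      rw [show ((k:ℝ)+α+1)-1 = (k:ℝ)+α by ring, Real.rpow_add hx]
    have hexp : Real.exp (-((1-s) * x)) = Real.exp (s*x) * Real.exp (-x) := by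
      rw [← Real.exp_add]; ring_nf
    simp only [wA, hsplit, hexp, ← hxk]
    ring
  rw [MeasureTheory.setIntegral_congr_fun measurableSet_Ioi hcong,
    MeasureTheory.integral_const_mul,
    Real.integral_rpow_mul_exp_neg_mul_Ioi
      (by linarith [Nat.cast_nonneg (α := ℝ) k]) (by linarith)]

lemma integrable_laguerre_mul_exp {α : ℝ} (hα : -1 < α) (n : ℕ) {s : ℝ} (hs : s < 1) :
    Integrable (fun x => laguerre α n x * Real.exp (s*x)) (muAlpha α) := by
  have : (fun x => laguerre α n x * Real.exp (s*x))
      = fun x => ∑ k ∈ Finset.range (n+1),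
        ((-1:ℝ)^k * (Real.Gamma (n+α+1) / (Real.Gamma (k+α+1) * (n-k).factorial * k.factorial)))
          * (x^k * Real.exp (s*x)) := by
    ext x; rw [laguerre, Finset.sum_mul]; congr 1; ext k; ring
  rw [this]
  exact integrable_finset_sum _ (fun k _ => (integrable_moment hα k hs).const_mul _)

lemma integral_laguerre_mul_exp {α : ℝ} (hα : -1 < α) (n : ℕ) {s : ℝ} (hs : s < 1) :
    ∫ x, laguerre α n x * Real.exp (s*x) ∂(muAlpha α)
      = Real.Gamma (n+α+1) / (Real.Gamma (α+1) * n.factorial)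
          * (1/(1-s))^(α+1) * (-(s/(1-s)))^n := by
  have h1s : (0:ℝ) < 1 - s := by linarith
  have hu : (0:ℝ) < 1/(1-s) := by positivity
  have hΓα : (0:ℝ) < Real.Gamma (α+1) := Real.Gamma_pos_of_pos (by linarith)
  have hrw : (fun x => laguerre α n x * Real.exp (s*x))
      = fun x => ∑ k ∈ Finset.range (n+1),
        ((-1:ℝ)^k * (Real.Gamma (n+α+1) / (Real.Gamma (k+α+1) * (n-k).factorial * k.factorial)))
          * (x^k * Real.exp (s*x)) := by
    ext x; rw [laguerre, Finset.sum_mul]; congr 1; ext k; ring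
  rw [hrw, integral_finset_sum _ (fun k _ => (integrable_moment hα k hs).const_mul _)]
  simp_rw [MeasureTheory.integral_const_mul, integral_moment hα _ hs]
  have key : ∀ k ∈ Finset.range (n+1),
      ((-1:ℝ)^k * (Real.Gamma (n+α+1) / (Real.Gamma (k+α+1) * (n-k).factorial * k.factorial)))
        * ((Real.Gamma (α+1))⁻¹ * ((1/(1-s)) ^ ((k:ℝ)+α+1) * Real.Gamma ((k:ℝ)+α+1)))
      = (Real.Gamma (n+α+1) / (Real.Gamma (α+1) * n.factorial) * (1/(1-s))^(α+1))
          * ((-(1/(1-s)))^k * 1^(n-k) * (n.choose k : ℝ)) := by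
    intro k hk
    have hkn : k ≤ n := Nat.lt_succ_iff.mp (Finset.mem_range.mp hk)
    have hΓk : (0:ℝ) < Real.Gamma ((k:ℝ)+α+1) :=
      Real.Gamma_pos_of_pos (by linarith [Nat.cast_nonneg (α := ℝ) k])
    have hch : (n.choose k : ℝ) * (k.factorial : ℝ) * ((n-k).factorial : ℝ)
        = (n.factorial : ℝ) := by
      exact_mod_cast congrArg (Nat.cast : ℕ → ℝ)
        (Nat.choose_mul_factorial_mul_factorial hkn)
    have hsplit : (1/(1-s)) ^ ((k:ℝ)+α+1) = (1/(1-s))^(α+1) * (1/(1-s))^k := by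
      rw [show (k:ℝ)+α+1 = (α+1)+(k:ℝ) by ring, Real.rpow_add hu, Real.rpow_natCast]
    rw [hsplit, neg_pow, one_pow]
    have hfk : ((k.factorial : ℝ)) ≠ 0 := Nat.cast_ne_zero.mpr (Nat.factorial_ne_zero k)
    have hfnk : (((n-k).factorial : ℝ)) ≠ 0 := Nat.cast_ne_zero.mpr (Nat.factorial_ne_zero _)
    have hfn : ((n.factorial : ℝ)) ≠ 0 := Nat.cast_ne_zero.mpr (Nat.factorial_ne_zero n)
    field_simp
    rw [← hch]
    ring
  rw [Finset.sum_congr rfl key, ← Finset.mul_sum, ← add_pow]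
  have : -(1/(1-s)) + 1 = -(s/(1-s)) := by field_simp; ring
  rw [this]

lemma gamma_fact {α : ℝ} (hα : -1 < α) : ∀ m : ℕ,
    Real.Gamma (α+2) * m.factorial ≤ Real.Gamma (α+2+m) := by
  intro m
  induction m with
  | zero => simp
  | succ m ih =>
    have hm : (0:ℝ) ≤ (m:ℝ) := Nat.cast_nonneg m
    have hpos : (0:ℝ) < α+2+m := by linarith
    have hG : (0:ℝ) < Real.Gamma (α+2+m) := Real.Gamma_pos_of_pos hpos
    have hstep : Real.Gamma (α+2+(m+1:ℕ)) = (α+2+m) * Real.Gamma (α+2+m) := by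
      rw [show (α+2+((m+1:ℕ):ℝ)) = (α+2+m)+1 by push_cast; ring, Real.Gamma_add_one hpos.ne']
    rw [hstep, Nat.factorial_succ]
    push_cast
    nlinarith [(Nat.one_le_cast (α := ℝ)).mpr (Nat.one_le_iff_ne_zero.mpr (Nat.factorial_ne_zero m)), ih]

lemma poly_le_geom {t : ℝ} (ht : 1 < t) (β : ℝ) :
    ∃ C : ℝ, 0 < C ∧ ∀ n : ℕ, 1 ≤ n → (n:ℝ)^β ≤ C * t^n := by
  obtain ⟨k, hk⟩ := exists_nat_ge β
  have htend := tendsto_pow_const_div_const_pow_of_one_lt k ht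
  obtain ⟨N, hN⟩ := Filter.eventually_atTop.mp (htend.eventually_lt_const one_pos)
  refine ⟨max 1 ((N:ℝ)^k), lt_of_lt_of_le one_pos (le_max_left _ _), fun n hn => ?_⟩
  have hn1 : (1:ℝ) ≤ (n:ℝ) := Nat.one_le_cast.mpr hn
  have htn : (0:ℝ) < t^n := pow_pos (by linarith) n
  have h1 : (n:ℝ)^β ≤ (n:ℝ)^(k:ℝ) :=
    Real.rpow_le_rpow_of_exponent_le hn1 hk
  rw [Real.rpow_natCast] at h1
  refine h1.trans ?_
  rcases le_or_gt N n with hNn | hNn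
  · have := hN n hNn
    have h2 : (n:ℝ)^k ≤ t^n := by
      rw [div_lt_one htn] at this
      linarith
    calc (n:ℝ)^k ≤ t^n := h2
      _ = 1 * t^n := (one_mul _).symm
      _ ≤ max 1 ((N:ℝ)^k) * t^n := by gcongr ?_ * _; exact le_max_left _ _
  · have h2 : (n:ℝ)^k ≤ (N:ℝ)^k :=
      pow_le_pow_left₀ (by linarith) (by exact_mod_cast hNn.le) k
    have h3 : (1:ℝ) ≤ t^n := one_le_pow₀ ht.le
    calc (n:ℝ)^k ≤ (N:ℝ)^k := h2
      _ = (N:ℝ)^k * 1 := (mul_one _).symm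
      _ ≤ max 1 ((N:ℝ)^k) * t^n := mul_le_mul (le_max_right _ _) h3 one_pos.le (le_trans one_pos.le (le_max_left _ _))

lemma measurable_laguerreL2 {α : ℝ} {n : ℕ} : Measurable (laguerreL2 α n) := by
  unfold laguerreL2 laguerre
  fun_prop

set_option maxHeartbeats 1000000 in
/-- For q > 2, α > −1 and ρ ∈ (0, q−1) there is c > 0 such that for all n ≥ 1,
`‖ℓ_n^α‖_{L^q(μ_α)} ≥ c ρ^n n^{α/2}`. -/
theorem stmt7 (q α : ℝ) (hq : 2 < q) (hα : -1 < α) :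
    ∀ ρ : ℝ, 0 < ρ → ρ < q - 1 →
      ∃ c : ℝ, 0 < c ∧ ∀ n : ℕ, 1 ≤ n →
        ENNReal.ofReal (c * ρ^n * (n:ℝ) ^ (α/2))
          ≤ eLpNorm (laguerreL2 α n) (ENNReal.ofReal q) (muAlpha α) := by
  intro ρ hρ0 hρq
  set ρ' : ℝ := (ρ + (q-1))/2 with hρ'def
  have hρ'0 : 0 < ρ' := by rw [hρ'def]; linarith
  have hρρ' : ρ < ρ' := by rw [hρ'def]; linarith
  have hρ'q : ρ' < q - 1 := by rw [hρ'def]; linarith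
  set σ : ℝ := ρ'/(1+ρ') with hσdef
  have h1ρ' : 0 < 1 + ρ' := by linarith
  have hσ0 : 0 < σ := by rw [hσdef]; positivity
  have hσ1 : σ < 1 := by rw [hσdef, div_lt_one h1ρ']; linarith
  have h1σpos : 0 < 1 - σ := by linarith
  have h1σ : 1 - σ = 1/(1+ρ') := by rw [hσdef]; field_simp; ring
  have hratio : σ/(1-σ) = ρ' := by rw [h1σ, hσdef]; field_simp
  set q' : ℝ := q/(q-1) with hq'def
  have hpq : q.HolderConjugate q' := Real.HolderConjugate.conjExponent (by linarith)
  have hq'0 : 0 < q' := hpq.symm.pos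
  have hq'σ : q' * σ < 1 := by
    rw [hq'def, hσdef, div_mul_div_comm,
      div_lt_one (mul_pos (by linarith : (0:ℝ) < q - 1) h1ρ')]
    nlinarith [hρ'q, h1ρ']
  have hΓα : 0 < Real.Gamma (α+1) := Real.Gamma_pos_of_pos (by linarith)
  have hΓα2 : 0 < Real.Gamma (α+2) := Real.Gamma_pos_of_pos (by linarith)
  -- the dual exponential weight
  set W : ℝ := (1/(1-q'*σ)) ^ (α+1) with hWdef
  have hW0 : 0 < W := Real.rpow_pos_of_pos (one_div_pos.mpr (by linarith)) _
  set B : ℝ := W ^ (1/q') with hBdef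
  have hB0 : 0 < B := Real.rpow_pos_of_pos hW0 _
  set S : ℝ := Real.sqrt (Real.Gamma (α+2)/Real.Gamma (α+1)) with hSdef
  have hS0 : 0 < S := Real.sqrt_pos.mpr (by positivity)
  set u : ℝ := (1/(1-σ))^(α+1) with hudef
  have hu0 : 0 < u := Real.rpow_pos_of_pos (by positivity) _
  have ht : 1 < ρ'/ρ := (one_lt_div hρ0).mpr hρρ'
  obtain ⟨C, hC0, hC⟩ := poly_le_geom ht ((α+1)/2)
  set K : ℝ := S * u / B with hKdef
  have hK0 : 0 < K := by rw [hKdef]; positivity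
  refine ⟨K/C, by positivity, fun n hn => ?_⟩
  have hn1 : (1:ℝ) ≤ (n:ℝ) := by exact_mod_cast hn
  have hn0 : (0:ℝ) < (n:ℝ) := by linarith
  have hΓn1 : 0 < Real.Gamma ((n:ℝ)+α+1) := Real.Gamma_pos_of_pos (by linarith)
  set X : ℝ := Real.Gamma ((n:ℝ)+α+1) / (Real.Gamma (α+1) * (n.factorial:ℝ)) with hXdef
  have hfac0 : (0:ℝ) < (n.factorial:ℝ) := by exact_mod_cast (Nat.factorial_pos n)
  have hX0 : 0 < X := by rw [hXdef]; positivity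
  set cn : ℝ := Real.sqrt ((n.factorial:ℝ) * Real.Gamma (α+1) / Real.Gamma ((n:ℝ)+α+1))
    with hcndef
  have hcn0 : 0 ≤ cn := Real.sqrt_nonneg _
  have hcnX : cn * X = Real.sqrt X := by
    have h1 : (n.factorial:ℝ) * Real.Gamma (α+1) / Real.Gamma ((n:ℝ)+α+1) = X⁻¹ := by
      rw [hXdef, inv_div]; ring
    have hs0 : Real.sqrt X ≠ 0 := (Real.sqrt_pos.mpr hX0).ne'
    rw [hcndef, h1, Real.sqrt_inv, inv_mul_eq_div, div_eq_iff hs0, Real.mul_self_sqrt hX0.le]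
  -- value of the pairing
  set V : ℝ := Real.sqrt X * u * ρ'^n with hVdef
  have hV0 : 0 < V := by
    rw [hVdef]
    exact mul_pos (mul_pos (Real.sqrt_pos.mpr hX0) hu0) (pow_pos hρ'0 n)
  have hfun : (fun x => laguerreL2 α n x * Real.exp (σ*x))
      = fun x => cn * (laguerre α n x * Real.exp (σ*x)) := by
    ext x; rw [laguerreL2]; ring
  have hI : Integrable (fun x => laguerreL2 α n x * Real.exp (σ*x)) (muAlpha α) := by
    rw [hfun]; exact (integrable_laguerre_mul_exp hα n hσ1).const_mul _
  have hV : |∫ x, laguerreL2 α n x * Real.exp (σ*x) ∂(muAlpha α)| = V := by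
    rw [hfun, MeasureTheory.integral_const_mul, integral_laguerre_mul_exp hα n hσ1, hratio]
    rw [abs_mul, abs_mul, abs_mul, abs_pow, abs_neg,
      abs_of_pos hρ'0, abs_of_nonneg hcn0, abs_of_pos hX0, abs_of_pos hu0]
    rw [hVdef, ← hcnX]; ring
  -- Hölder
  set F : ℝ → ℝ≥0∞ := fun x => (‖laguerreL2 α n x‖₊ : ℝ≥0∞) with hFdef
  set G : ℝ → ℝ≥0∞ := fun x => ENNReal.ofReal (Real.exp (σ*x)) with hGdef
  have hmeasF : AEMeasurable F (muAlpha α) :=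
    (measurable_laguerreL2.nnnorm.coe_nnreal_ennreal).aemeasurable
  have hmeasG : AEMeasurable G (muAlpha α) := by
    have : Measurable fun x : ℝ => Real.exp (σ*x) := by fun_prop
    exact this.ennreal_ofReal.aemeasurable
  have holder := ENNReal.lintegral_mul_le_Lp_mul_Lq (muAlpha α) hpq hmeasF hmeasG
  -- lower bound on the product integral
  have hlhs : ENNReal.ofReal V ≤ ∫⁻ x, (F * G) x ∂(muAlpha α) := by
    rw [← hV]
    have h1 : |∫ x, laguerreL2 α n x * Real.exp (σ*x) ∂(muAlpha α)|
        ≤ ∫ x, |laguerreL2 α n x * Real.exp (σ*x)| ∂(muAlpha α) := by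
      have := MeasureTheory.norm_integral_le_integral_norm
        (μ := muAlpha α) (f := fun x => laguerreL2 α n x * Real.exp (σ*x))
      simp only [Real.norm_eq_abs] at this
      exact this
    refine le_trans (ENNReal.ofReal_le_ofReal h1) ?_
    rw [MeasureTheory.ofReal_integral_eq_lintegral_ofReal hI.abs
      (Filter.Eventually.of_forall fun x => abs_nonneg _)]
    refine le_of_eq (MeasureTheory.lintegral_congr fun x => ?_)
    simp only [Pi.mul_apply, hFdef, hGdef]
    rw [abs_mul, abs_of_pos (Real.exp_pos _), ENNReal.ofReal_mul (abs_nonneg _),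
      ← enorm_eq_nnnorm, Real.enorm_eq_ofReal_abs]
  -- identify the two factors
  have heLp : (∫⁻ x, (F x)^q ∂(muAlpha α))^(1/q)
      = eLpNorm (laguerreL2 α n) (ENNReal.ofReal q) (muAlpha α) := by
    rw [eLpNorm_eq_lintegral_rpow_enorm_toReal
      (by simp [ENNReal.ofReal_eq_zero]; linarith) ENNReal.ofReal_ne_top,
      ENNReal.toReal_ofReal (by linarith)]
    rfl
  have hIexp : Integrable (fun x => Real.exp ((q'*σ)*x)) (muAlpha α) := by
    have := integrable_moment (α := α) hα 0 hq'σ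
    simpa using this
  have hWint : ∫ x, Real.exp ((q'*σ)*x) ∂(muAlpha α) = W := by
    have h0 := integral_moment (α := α) hα 0 hq'σ
    simp only [pow_zero, one_mul, Nat.cast_zero, zero_add] at h0
    rw [h0, hWdef, mul_comm ((1/(1-q'*σ)) ^ (α+1)), ← mul_assoc,
      inv_mul_cancel₀ hΓα.ne', one_mul]
  have hGq' : (∫⁻ x, (G x)^q' ∂(muAlpha α))^(1/q') = ENNReal.ofReal B := by
    have hpt : ∀ x : ℝ, (G x)^q' = ENNReal.ofReal (Real.exp ((q'*σ)*x)) := by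
      intro x
      rw [hGdef]
      rw [ENNReal.ofReal_rpow_of_nonneg (Real.exp_pos _).le hq'0.le, ← Real.exp_mul,
        show σ*x*q' = (q'*σ)*x by ring]
    simp_rw [hpt]
    rw [← MeasureTheory.ofReal_integral_eq_lintegral_ofReal hIexp
      (Filter.Eventually.of_forall fun x => (Real.exp_pos _).le), hWint, hBdef,
      ← ENNReal.ofReal_rpow_of_nonneg hW0.le (by positivity)]
  have main : ENNReal.ofReal V
      ≤ eLpNorm (laguerreL2 α n) (ENNReal.ofReal q) (muAlpha α) * ENNReal.ofReal B := by
    refine le_trans hlhs (le_trans holder ?_)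
    rw [heLp, hGq']
  -- the real inequality
  have hfact : (n.factorial:ℝ) = (n:ℝ) * ((n-1).factorial:ℝ) := by
    exact_mod_cast (Nat.mul_factorial_pred (by omega)).symm
  have hgam : Real.Gamma (α+2) * (((n-1).factorial:ℝ)) ≤ Real.Gamma ((n:ℝ)+α+1) := by
    have h2 := gamma_fact hα (n-1)
    rwa [show α+2+(((n-1:ℕ)):ℝ) = (n:ℝ)+α+1 by rw [Nat.cast_sub hn]; push_cast; ring] at h2
  have hXlb : Real.Gamma (α+2)/Real.Gamma (α+1)/(n:ℝ) ≤ X := by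
    rw [div_div, hXdef, div_le_div_iff₀ (by positivity) (by positivity), hfact]
    have h3 := mul_le_mul_of_nonneg_right hgam
      (show (0:ℝ) ≤ Real.Gamma (α+1) * (n:ℝ) by positivity)
    linarith [h3]
  have hsn0 : 0 < Real.sqrt (n:ℝ) := Real.sqrt_pos.mpr hn0
  have hsqrtlb : S / Real.sqrt (n:ℝ) ≤ Real.sqrt X := by
    rw [hSdef, ← Real.sqrt_div (by positivity)]
    exact Real.sqrt_le_sqrt hXlb
  have hns : (n:ℝ)^(α/2) * Real.sqrt (n:ℝ) = (n:ℝ)^((α+1)/2) := by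
    rw [Real.sqrt_eq_rpow, ← Real.rpow_add hn0]
    congr 1; ring
  have hρ'pow : (ρ'/ρ)^n * ρ^n = ρ'^n := by
    rw [← mul_pow, div_mul_cancel₀ _ hρ0.ne']
  have hKB : K * B = S * u := by rw [hKdef, div_mul_cancel₀ _ hB0.ne']
  have hmain1 : (K/C)*B*((n:ℝ)^((α+1)/2)) ≤ S * u * (ρ'/ρ)^n := by
    calc (K/C)*B*((n:ℝ)^((α+1)/2)) ≤ (K/C)*B*(C*(ρ'/ρ)^n) := by
          exact mul_le_mul_of_nonneg_left (hC n hn) (by positivity)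
      _ = (K*B)*(ρ'/ρ)^n := by field_simp
      _ = S * u * (ρ'/ρ)^n := by rw [hKB]
  have hreal : (K/C) * ρ^n * (n:ℝ)^(α/2) * B ≤ V := by
    have step1 : (K/C) * ρ^n * (n:ℝ)^(α/2) * B ≤ (S/Real.sqrt (n:ℝ)) * u * ρ'^n := by
      rw [show S/Real.sqrt (n:ℝ) * u * ρ'^n = (S*u*ρ'^n)/Real.sqrt (n:ℝ) by ring,
        le_div_iff₀ hsn0]
      calc K/C*ρ^n*(n:ℝ)^(α/2)*B*Real.sqrt (n:ℝ)
          = K/C*B*((n:ℝ)^(α/2)*Real.sqrt (n:ℝ))*ρ^n := by ring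
        _ = K/C*B*(n:ℝ)^((α+1)/2)*ρ^n := by rw [hns]
        _ ≤ S*u*(ρ'/ρ)^n*ρ^n := mul_le_mul_of_nonneg_right hmain1 (by positivity)
        _ = S*u*ρ'^n := by rw [mul_assoc, hρ'pow]
    refine le_trans step1 ?_
    rw [hVdef]
    have h2 : S/Real.sqrt (n:ℝ) ≤ Real.sqrt X := hsqrtlb
    have := mul_le_mul_of_nonneg_right (mul_le_mul_of_nonneg_right h2 hu0.le)
      (show (0:ℝ) ≤ ρ'^n by positivity)
    exact this
  -- conclude
  have h1 : ENNReal.ofReal ((K/C) * ρ^n * (n:ℝ)^(α/2)) * ENNReal.ofReal B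
      ≤ eLpNorm (laguerreL2 α n) (ENNReal.ofReal q) (muAlpha α) * ENNReal.ofReal B := by
    rw [← ENNReal.ofReal_mul (by positivity)]
    exact le_trans (ENNReal.ofReal_le_ofReal hreal) main
  have hBne : ENNReal.ofReal B ≠ 0 := by
    rw [Ne, ENNReal.ofReal_eq_zero]; exact not_le.mpr hB0
  exact (ENNReal.mul_le_mul_iff_left hBne ENNReal.ofReal_ne_top).mp h1
end

section
/- Fix σ > 0. There exists a constant C > 0 such that for every t > 0, ∫_0^∞ t · s^{−3/2} · e^{−t²/(4s)} · min(1,s)^{−σ/2} ds ≤ C · min(1,t)^{−σ}. -/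
open MeasureTheory Filter Real
open scoped ENNReal NNReal

private lemma measF (t a : ℝ) : Measurable (fun s : ℝ =>
    ENNReal.ofReal (t * s ^ (-(3:ℝ)/2) * Real.exp (-t^2/(4*s)) * s ^ (-a/2))) := by
  fun_prop

private lemma measG (a : ℝ) : Measurable (fun u : ℝ =>
    u ^ (-(3:ℝ)/2) * Real.exp (-1/(4*u)) * u ^ (-a/2)) := by
  fun_prop

private lemma scale {f : ℝ → ℝ≥0∞} (hf : Measurable f) {c : ℝ} (hc : 0 < c) :
    ∫⁻ s in Set.Ioi (0:ℝ), f s = ENNReal.ofReal c * ∫⁻ u in Set.Ioi (0:ℝ), f (c * u) := by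
  have h0 : Measurable fun u : ℝ => c * u := measurable_const_mul c
  have hpre : (fun u : ℝ => c * u) ⁻¹' Set.Ioi 0 = Set.Ioi 0 := by
    ext x
    simp only [Set.mem_preimage, Set.mem_Ioi]
    exact mul_pos_iff_of_pos_left hc
  conv_lhs => rw [← Real.smul_map_volume_mul_left (ne_of_gt hc)]
  rw [Measure.restrict_smul, lintegral_smul_measure,
    Measure.restrict_map h0 measurableSet_Ioi, hpre, lintegral_map hf h0, abs_of_pos hc, smul_eq_mul]

/-- Scaling identity: substitute `s = t² u`. -/
private lemma scaled (a t : ℝ) (ht : 0 < t) :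
    ∫⁻ s in Set.Ioi (0:ℝ),
        ENNReal.ofReal (t * s ^ (-(3:ℝ)/2) * Real.exp (-t^2/(4*s)) * s ^ (-a/2))
      = ENNReal.ofReal (t ^ (-a)) *
        ∫⁻ u in Set.Ioi (0:ℝ),
          ENNReal.ofReal (u ^ (-(3:ℝ)/2) * Real.exp (-1/(4*u)) * u ^ (-a/2)) := by
  have ht2 : (0:ℝ) < t ^ 2 := by positivity
  rw [scale (measF t a) ht2, ← lintegral_const_mul' _ _ ENNReal.ofReal_ne_top,
    ← lintegral_const_mul' _ _ ENNReal.ofReal_ne_top]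
  apply setLIntegral_congr_fun measurableSet_Ioi
  refine fun u hu => ?_; beta_reduce
  have hu : (0:ℝ) < u := hu
  rw [← ENNReal.ofReal_mul ht2.le, ← ENNReal.ofReal_mul (Real.rpow_nonneg ht.le _)]
  congr 1
  have h1 : (t^2*u) ^ (-(3:ℝ)/2) = (t^2) ^ (-(3:ℝ)/2) * u ^ (-(3:ℝ)/2) :=
    Real.mul_rpow ht2.le hu.le
  have h2 : (t^2*u) ^ (-a/2) = (t^2) ^ (-a/2) * u ^ (-a/2) := Real.mul_rpow ht2.le hu.le
  have h3 : -t^2/(4*(t^2*u)) = -1/(4*u) := by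
    field_simp
  have e1 : (t^2 : ℝ) ^ (-(3:ℝ)/2) = t ^ (-(3:ℝ)) := by
    rw [← Real.rpow_natCast t 2, ← Real.rpow_mul ht.le]; norm_num
  have e2 : (t^2 : ℝ) ^ (-a/2) = t ^ (-a) := by
    rw [← Real.rpow_natCast t 2, ← Real.rpow_mul ht.le]; ring_nf
  have e3 : t^2 * t * t ^ (-(3:ℝ)) = 1 := by
    rw [Real.rpow_neg ht.le, show ((3:ℝ)) = ((3:ℕ):ℝ) by norm_num, Real.rpow_natCast]
    field_simp
  rw [h1, h2, h3, e1, e2]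
  calc t^2 * (t * (t ^ (-(3:ℝ)) * u ^ (-(3:ℝ)/2)) * Real.exp (-1/(4*u)) *
        (t ^ (-a) * u ^ (-a/2)))
      = (t^2 * t * t ^ (-(3:ℝ))) *
        (t ^ (-a) * (u ^ (-(3:ℝ)/2) * Real.exp (-1/(4*u)) * u ^ (-a/2))) := by ring
    _ = t ^ (-a) * (u ^ (-(3:ℝ)/2) * Real.exp (-1/(4*u)) * u ^ (-a/2)) := by rw [e3]; ring

private lemma pow_le_exp_aux (x : ℝ) (hx : 0 ≤ x) (n : ℕ) : x ^ n / (Nat.factorial n : ℝ) ≤ Real.exp x := by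
  refine le_trans ?_ (Real.sum_le_exp_of_nonneg hx (n+1))
  exact Finset.single_le_sum (f := fun i => x ^ i / (Nat.factorial i : ℝ))
    (fun i _ => by positivity) (Finset.self_mem_range_succ n)

private lemma Jfin (a : ℝ) (ha : 0 ≤ a) :
    ∫⁻ u in Set.Ioi (0:ℝ),
      ENNReal.ofReal (u ^ (-(3:ℝ)/2) * Real.exp (-1/(4*u)) * u ^ (-a/2)) < ⊤ := by
  set h : ℝ → ℝ := fun u => u ^ (-(3:ℝ)/2) * Real.exp (-1/(4*u)) * u ^ (-a/2) with hh
  have hmeas : Measurable h := measG a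
  set b : ℝ := 3/2 + a/2 with hb
  have hbpos : 0 < b := by positivity
  set n : ℕ := ⌈b⌉₊ with hn
  have hnb : b ≤ n := Nat.le_ceil b
  -- combine the two rpow factors for u > 0
  have hcomb : ∀ u : ℝ, 0 < u → h u = u ^ (-b) * Real.exp (-1/(4*u)) := by
    intro u hu
    have : u ^ (-(3:ℝ)/2) * u ^ (-a/2) = u ^ (-b) := by
      rw [← Real.rpow_add hu, hb]; congr 1; ring
    rw [hh]; dsimp only; rw [mul_right_comm, this]
  have hnonneg : ∀ u : ℝ, 0 < u → 0 ≤ h u := fun u hu => by positivity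
  -- integrable on Ioc 0 1
  have h1 : IntegrableOn h (Set.Ioc 0 1) := by
    apply Measure.integrableOn_of_bounded (M := (Nat.factorial n : ℝ) * 4 ^ n)
    · simp [Real.volume_Ioc]
    · exact hmeas.aestronglyMeasurable
    · filter_upwards [ae_restrict_mem measurableSet_Ioc] with u hu
      obtain ⟨hu0, hu1⟩ := hu
      rw [Real.norm_eq_abs, abs_of_nonneg (hnonneg u hu0), hcomb u hu0]
      have hx : (0:ℝ) ≤ 1/(4*u) := by positivity
      have hexp : Real.exp (-1/(4*u)) ≤ ((Nat.factorial n : ℝ) : ℝ) * (4*u) ^ n := by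
        have h4 : (0:ℝ) < (4*u) ^ n := by positivity
        have := pow_le_exp_aux (1/(4*u)) hx n
        have hinv : Real.exp (-1/(4*u)) = (Real.exp (1/(4*u)))⁻¹ := by
          rw [← Real.exp_neg]; ring_nf
        rw [hinv]
        rw [inv_le_iff_one_le_mul₀ (Real.exp_pos _)]
        have h1exp : (1/(4*u)) ^ n / (Nat.factorial n : ℝ) ≤ Real.exp (1/(4*u)) := this
        have hfac : (0:ℝ) < ((Nat.factorial n : ℝ) : ℝ) := by positivity
        have key : (1:ℝ) ≤ Real.exp (1/(4*u)) * (((Nat.factorial n : ℝ) : ℝ) * (4*u) ^ n) := by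
          have : (1/(4*u)) ^ n = 1 / (4*u) ^ n := by rw [div_pow]; norm_num
          rw [this] at h1exp
          calc (1:ℝ) = (1 / (4*u) ^ n / (Nat.factorial n : ℝ)) * ((Nat.factorial n : ℝ) * (4*u) ^ n) := by
                field_simp
            _ ≤ Real.exp (1/(4*u)) * ((Nat.factorial n : ℝ) * (4*u) ^ n) := by
                apply mul_le_mul_of_nonneg_right h1exp; positivity
        linarith [key]
      calc u ^ (-b) * Real.exp (-1/(4*u)) ≤ u ^ (-b) * (((Nat.factorial n : ℝ) : ℝ) * (4*u) ^ n) := by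
            apply mul_le_mul_of_nonneg_left hexp (Real.rpow_nonneg hu0.le _)
        _ = ((Nat.factorial n : ℝ) : ℝ) * 4 ^ n * (u ^ (-b) * u ^ (n:ℝ)) := by
            rw [mul_pow, ← Real.rpow_natCast u n]; ring
        _ = ((Nat.factorial n : ℝ) : ℝ) * 4 ^ n * u ^ ((n:ℝ) - b) := by
            rw [← Real.rpow_add hu0]; ring_nf
        _ ≤ ((Nat.factorial n : ℝ) : ℝ) * 4 ^ n * 1 := by
            have : u ^ ((n:ℝ) - b) ≤ 1 :=
              Real.rpow_le_one hu0.le hu1 (by linarith)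
            apply mul_le_mul_of_nonneg_left this; positivity
        _ = ((Nat.factorial n : ℝ) : ℝ) * 4 ^ n := by ring
  -- integrable on Ioi 1
  have h2 : IntegrableOn h (Set.Ioi 1) := by
    have hg : IntegrableOn (fun u : ℝ => u ^ (-(3:ℝ)/2)) (Set.Ioi 1) :=
      integrableOn_Ioi_rpow_of_lt (by norm_num) one_pos
    apply Integrable.mono hg hmeas.aestronglyMeasurable
    filter_upwards [ae_restrict_mem measurableSet_Ioi] with u hu
    have hu1 : (1:ℝ) < u := hu
    have hu0 : (0:ℝ) < u := lt_trans one_pos hu1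
    rw [Real.norm_eq_abs, Real.norm_eq_abs, abs_of_nonneg (hnonneg u hu0),
      abs_of_nonneg (Real.rpow_nonneg hu0.le _), hh]
    have he : Real.exp (-1/(4*u)) ≤ 1 := by
      apply Real.exp_le_one_iff.mpr
      rw [neg_div]
      simp only [Left.neg_nonpos_iff]
      positivity
    have hr : u ^ (-a/2) ≤ 1 :=
      Real.rpow_le_one_of_one_le_of_nonpos hu1.le (by linarith)
    calc u ^ (-(3:ℝ)/2) * Real.exp (-1/(4*u)) * u ^ (-a/2)
        ≤ u ^ (-(3:ℝ)/2) * 1 * 1 := by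
          refine mul_le_mul (mul_le_mul_of_nonneg_left he (Real.rpow_nonneg hu0.le _))
            hr (Real.rpow_nonneg hu0.le _) (by positivity)
      _ = u ^ (-(3:ℝ)/2) := by ring
  have hint : IntegrableOn h (Set.Ioi 0) := by
    rw [show Set.Ioi (0:ℝ) = Set.Ioc 0 1 ∪ Set.Ioi 1 from
      (Set.Ioc_union_Ioi_eq_Ioi (by norm_num)).symm]
    exact h1.union h2
  calc ∫⁻ u in Set.Ioi (0:ℝ), ENNReal.ofReal (h u)
      ≤ ∫⁻ u in Set.Ioi (0:ℝ), ‖h u‖ₑ := lintegral_ofReal_le_lintegral_enorm h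
    _ < ⊤ := hint.2

/-- For σ > 0 there is C > 0 such that for every t > 0,
`∫_0^∞ t s^{−3/2} e^{−t²/(4s)} min(1,s)^{−σ/2} ds ≤ C min(1,t)^{−σ}`. -/
theorem stmt13 (σ : ℝ) (hσ : 0 < σ) :
    ∃ C : ℝ, 0 < C ∧ ∀ t : ℝ, 0 < t →
      (∫⁻ s in Set.Ioi (0:ℝ),
          ENNReal.ofReal (t * s ^ (-(3:ℝ)/2) * Real.exp (-t^2/(4*s)) * (min 1 s) ^ (-σ/2)))
        ≤ ENNReal.ofReal (C * (min 1 t) ^ (-σ)) := by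
  set J0 : ℝ≥0∞ := ∫⁻ u in Set.Ioi (0:ℝ),
      ENNReal.ofReal (u ^ (-(3:ℝ)/2) * Real.exp (-1/(4*u)) * u ^ (-(0:ℝ)/2)) with hJ0
  set Jσ : ℝ≥0∞ := ∫⁻ u in Set.Ioi (0:ℝ),
      ENNReal.ofReal (u ^ (-(3:ℝ)/2) * Real.exp (-1/(4*u)) * u ^ (-σ/2)) with hJσ
  have hJ0fin : J0 < ⊤ := Jfin 0 le_rfl
  have hJσfin : Jσ < ⊤ := Jfin σ hσ.le
  set K : ℝ := (J0 + Jσ).toReal with hK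
  have hKnn : 0 ≤ K := ENNReal.toReal_nonneg
  have hsum : J0 + Jσ = ENNReal.ofReal K := by
    rw [hK, ENNReal.ofReal_toReal (by simp [hJ0fin.ne, hJσfin.ne])]
  refine ⟨K + 1, by linarith, fun t ht => ?_⟩
  set m : ℝ := (min 1 t) ^ (-σ) with hm
  have hmin : (0:ℝ) < min 1 t := lt_min one_pos ht
  have hmpos : 0 < m := Real.rpow_pos_of_pos hmin _
  have hm1 : (1:ℝ) ≤ m :=
    Real.one_le_rpow_of_pos_of_le_one_of_nonpos hmin (min_le_left _ _) (by linarith)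
  have htm : t ^ (-σ) ≤ m := by
    rcases le_total t 1 with h | h
    · rw [hm, min_eq_right h]
    · rw [hm, min_eq_left h]
      rw [Real.one_rpow]
      exact Real.rpow_le_one_of_one_le_of_nonpos h (by linarith)
  -- pointwise bound
  have step1 : (∫⁻ s in Set.Ioi (0:ℝ),
      ENNReal.ofReal (t * s ^ (-(3:ℝ)/2) * Real.exp (-t^2/(4*s)) * (min 1 s) ^ (-σ/2)))
      ≤ ((∫⁻ s in Set.Ioi (0:ℝ),
          ENNReal.ofReal (t * s ^ (-(3:ℝ)/2) * Real.exp (-t^2/(4*s)) * s ^ (-(0:ℝ)/2)))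
        + ∫⁻ s in Set.Ioi (0:ℝ),
          ENNReal.ofReal (t * s ^ (-(3:ℝ)/2) * Real.exp (-t^2/(4*s)) * s ^ (-σ/2))) := by
    refine le_trans (setLIntegral_mono' measurableSet_Ioi ?_)
      (le_of_eq (lintegral_add_left (measF t 0) _))
    intro s hs
    have hs : (0:ℝ) < s := hs
    have hP : 0 ≤ t * s ^ (-(3:ℝ)/2) * Real.exp (-t^2/(4*s)) := by positivity
    refine le_trans ?_ (ENNReal.ofReal_add_le)
    apply ENNReal.ofReal_le_ofReal
    have hminb : (min 1 s) ^ (-σ/2) ≤ s ^ (-(0:ℝ)/2) + s ^ (-σ/2) := by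
      have h0 : s ^ (-(0:ℝ)/2) = 1 := by norm_num
      rw [h0]
      rcases le_total 1 s with h | h
      · rw [min_eq_left h, Real.one_rpow]
        have : (0:ℝ) ≤ s ^ (-σ/2) := Real.rpow_nonneg hs.le _
        linarith
      · rw [min_eq_right h]
        linarith
    calc t * s ^ (-(3:ℝ)/2) * Real.exp (-t^2/(4*s)) * (min 1 s) ^ (-σ/2)
        ≤ t * s ^ (-(3:ℝ)/2) * Real.exp (-t^2/(4*s)) * (s ^ (-(0:ℝ)/2) + s ^ (-σ/2)) :=
          mul_le_mul_of_nonneg_left hminb hP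
      _ = t * s ^ (-(3:ℝ)/2) * Real.exp (-t^2/(4*s)) * s ^ (-(0:ℝ)/2)
          + t * s ^ (-(3:ℝ)/2) * Real.exp (-t^2/(4*s)) * s ^ (-σ/2) := by ring
  have step2 : ((∫⁻ s in Set.Ioi (0:ℝ),
        ENNReal.ofReal (t * s ^ (-(3:ℝ)/2) * Real.exp (-t^2/(4*s)) * s ^ (-(0:ℝ)/2)))
      + ∫⁻ s in Set.Ioi (0:ℝ),
        ENNReal.ofReal (t * s ^ (-(3:ℝ)/2) * Real.exp (-t^2/(4*s)) * s ^ (-σ/2)))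
      = ENNReal.ofReal (t ^ (-(0:ℝ))) * J0 + ENNReal.ofReal (t ^ (-σ)) * Jσ := by
    rw [hJ0, hJσ]
    exact congrArg₂ (· + ·) (scaled 0 t ht) (scaled σ t ht)
  have hone : ENNReal.ofReal (t ^ (-(0:ℝ))) = 1 := by
    norm_num
  have hmE : (1:ℝ≥0∞) ≤ ENNReal.ofReal m := ENNReal.one_le_ofReal.mpr hm1
  calc (∫⁻ s in Set.Ioi (0:ℝ),
          ENNReal.ofReal (t * s ^ (-(3:ℝ)/2) * Real.exp (-t^2/(4*s)) * (min 1 s) ^ (-σ/2)))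
      ≤ ENNReal.ofReal (t ^ (-(0:ℝ))) * J0 + ENNReal.ofReal (t ^ (-σ)) * Jσ :=
        step1.trans (le_of_eq step2)
    _ = J0 + ENNReal.ofReal (t ^ (-σ)) * Jσ := by rw [hone, one_mul]
    _ ≤ ENNReal.ofReal m * J0 + ENNReal.ofReal m * Jσ := by
        apply add_le_add
        · exact le_mul_of_one_le_left zero_le hmE
        · exact mul_le_mul_left (ENNReal.ofReal_le_ofReal htm) _
    _ = ENNReal.ofReal m * (J0 + Jσ) := by rw [mul_add]
    _ = ENNReal.ofReal m * ENNReal.ofReal K := by rw [hsum]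
    _ = ENNReal.ofReal (m * K) := (ENNReal.ofReal_mul hmpos.le).symm
    _ ≤ ENNReal.ofReal ((K + 1) * m) := by
        apply ENNReal.ofReal_le_ofReal
        nlinarith
end

section
/- Let b ≥ 0 and t > 0, and let f : ℕ → [0,∞) satisfy f(n) ≥ bn for all n ≥ 1 and f(n)/n → b as n → ∞. Define F_t(z) := e^{−t f(0)} + Σ_{n≥1} e^{−t f(n)} z^n / n! for z ≥ 0. Then F_t(z) is finite for every z ≥ 0, and lim_{z→+∞} log F_t(z) / z = e^{−bt}. -/
open MeasureTheory Filter Real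

set_option maxHeartbeats 1000000

lemma tsum_exp' (x : ℝ) : ∑' n : ℕ, x ^ n / n.factorial = Real.exp x := by
  rw [Real.exp_eq_exp_ℝ, NormedSpace.exp_eq_tsum_div]

lemma tail_exp (x : ℝ) (k : ℕ) :
    ∑' n : ℕ, x ^ (n + k) / (n + k).factorial
      = Real.exp x - ∑ i ∈ Finset.range k, x ^ i / i.factorial := by
  have h := Summable.sum_add_tsum_nat_add k (Real.summable_pow_div_factorial x)
  have h2 := tsum_exp' x
  linarith

/-- Let b ≥ 0, t > 0 and f : ℕ → [0,∞) with f(n) ≥ bn for n ≥ 1 and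
f(n)/n → b. Then `F_t(z) := e^{−t f(0)} + Σ_{n≥1} e^{−t f(n)} z^n/n!` is finite for every
z ≥ 0 (i.e. the series is summable) and `log F_t(z)/z → e^{−bt}` as z → +∞. -/
theorem stmt17 (b t : ℝ) (hb : 0 ≤ b) (ht : 0 < t) (f : ℕ → ℝ)
    (hf0 : ∀ n, 0 ≤ f n) (hfb : ∀ n : ℕ, 1 ≤ n → b * n ≤ f n)
    (hlim : Tendsto (fun n : ℕ => f n / n) atTop (nhds b)) :
    (∀ z : ℝ, 0 ≤ z →
        Summable (fun n : ℕ => Real.exp (-t * f (n+1)) * z^(n+1) / (n+1).factorial)) ∧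
    Tendsto (fun z : ℝ =>
        Real.log (Real.exp (-t * f 0) +
          ∑' n : ℕ, Real.exp (-t * f (n+1)) * z^(n+1) / (n+1).factorial) / z)
      atTop (nhds (Real.exp (-b * t))) := by
  have hsum : ∀ z : ℝ, 0 ≤ z →
      Summable (fun n : ℕ => Real.exp (-t * f (n+1)) * z^(n+1) / (n+1).factorial) := by
    intro z hz
    have hmaj : Summable (fun n : ℕ => z^(n+1) / ((n+1).factorial : ℝ)) :=
      (summable_nat_add_iff 1).2 (Real.summable_pow_div_factorial z)
    refine Summable.of_nonneg_of_le (fun n => by positivity) (fun n => ?_) hmaj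
    have h1 : Real.exp (-t * f (n+1)) ≤ 1 := by
      rw [Real.exp_le_one_iff]
      nlinarith [hf0 (n+1)]
    calc Real.exp (-t * f (n+1)) * z^(n+1) / (n+1).factorial
        ≤ 1 * z^(n+1) / (n+1).factorial := by gcongr
      _ = z^(n+1) / (n+1).factorial := by rw [one_mul]
  refine ⟨hsum, ?_⟩
  set F : ℝ → ℝ := fun z => Real.exp (-t * f 0) +
      ∑' n : ℕ, Real.exp (-t * f (n+1)) * z^(n+1) / (n+1).factorial with hF
  have hFpos : ∀ z : ℝ, 0 ≤ z → 0 < F z := by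
    intro z hz
    have h1 : 0 ≤ ∑' n : ℕ, Real.exp (-t * f (n+1)) * z^(n+1) / (n+1).factorial :=
      tsum_nonneg fun n => by positivity
    have := Real.exp_pos (-t * f 0)
    simp only [hF]; linarith
  -- upper bound : F z ≤ exp (exp(-b*t) * z)
  have hFle : ∀ z : ℝ, 0 ≤ z → F z ≤ Real.exp (Real.exp (-b*t) * z) := by
    intro z hz
    have hterm : ∀ n : ℕ, Real.exp (-t * f (n+1)) * z^(n+1) / (n+1).factorial
        ≤ (Real.exp (-b*t) * z)^(n+1) / (n+1).factorial := by
      intro n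
      rw [mul_pow, ← Real.exp_nat_mul]
      have hexp : Real.exp (-t * f (n+1)) ≤ Real.exp (((n+1 : ℕ) : ℝ) * (-b*t)) := by
        rw [Real.exp_le_exp]
        have := hfb (n+1) (by omega)
        push_cast
        push_cast at this
        nlinarith [ht.le]
      gcongr ?_ * _ / _
    have h1 : ∑' n : ℕ, Real.exp (-t * f (n+1)) * z^(n+1) / (n+1).factorial
        ≤ ∑' n : ℕ, (Real.exp (-b*t) * z)^(n+1) / (n+1).factorial :=
      Summable.tsum_le_tsum hterm (hsum z hz)
        ((summable_nat_add_iff 1).2 (Real.summable_pow_div_factorial _))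
    have h2 := tail_exp (Real.exp (-b*t) * z) 1
    simp only [Finset.sum_range_one, pow_zero, Nat.factorial_zero, Nat.cast_one, div_one] at h2
    have h3 : Real.exp (-t * f 0) ≤ 1 := by
      rw [Real.exp_le_one_iff]; nlinarith [hf0 0]
    simp only [hF]; linarith
  rw [tendsto_order]
  constructor
  · -- lower bound part
    intro a' ha'
    have hcont : Tendsto (fun ε : ℝ => Real.exp (-(b+ε)*t)) (nhds 0)
        (nhds (Real.exp (-b*t))) := by
      have : Continuous (fun ε : ℝ => Real.exp (-(b+ε)*t)) := by continuity
      simpa using this.tendsto 0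
    have hev0 : ∀ᶠ ε in nhds (0:ℝ), a' < Real.exp (-(b+ε)*t) :=
      hcont.eventually (eventually_gt_nhds ha')
    obtain ⟨ε, hε_lt, hε_pos⟩ :=
      ((hev0.filter_mono nhdsWithin_le_nhds).and self_mem_nhdsWithin).exists
        (f := nhdsWithin (0:ℝ) (Set.Ioi 0))
    replace hε_pos : (0:ℝ) < ε := hε_pos
    set c : ℝ := Real.exp (-(b+ε)*t) with hc
    have hcpos : 0 < c := Real.exp_pos _
    have hev : ∀ᶠ n : ℕ in atTop, f n / n < b + ε :=
      hlim.eventually (eventually_lt_nhds (by linarith))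
    obtain ⟨N₀, hN₀⟩ := eventually_atTop.1 hev
    set N : ℕ := max N₀ 1 with hN
    have hfN : ∀ m : ℕ, N ≤ m → f m ≤ (b+ε) * m := by
      intro m hm
      have hm1 : 1 ≤ m := le_trans (le_max_right _ _) hm
      have hmpos : (0:ℝ) < m := by exact_mod_cast hm1
      have := hN₀ m (le_trans (le_max_left _ _) hm)
      rw [div_lt_iff₀ hmpos] at this
      linarith
    -- lower bound : F z ≥ exp (c*z) - Q z
    set Q : ℝ → ℝ := fun z => ∑ i ∈ Finset.range (N+1), (c*z)^i / i.factorial with hQ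
    have hFlow : ∀ z : ℝ, 0 ≤ z → Real.exp (c*z) - Q z ≤ F z := by
      intro z hz
      have hS := hsum z hz
      have hsplit := Summable.sum_add_tsum_nat_add N hS
      beta_reduce at hsplit
      have hps : 0 ≤ ∑ i ∈ Finset.range N,
          Real.exp (-t * f (i+1)) * z^(i+1) / (i+1).factorial :=
        Finset.sum_nonneg fun i _ => by positivity
      have hterm : ∀ n : ℕ, (c*z)^(n+(N+1)) / ((n+(N+1)).factorial : ℝ)
          ≤ Real.exp (-t * f (n+N+1)) * z^(n+N+1) / ((n+N+1).factorial : ℝ) := by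
        intro n
        have heq : n + (N+1) = n + N + 1 := by omega
        rw [heq, mul_pow, ← Real.exp_nat_mul]
        have hexp : Real.exp (((n+N+1 : ℕ) : ℝ) * (-(b+ε)*t)) ≤ Real.exp (-t * f (n+N+1)) := by
          rw [Real.exp_le_exp]
          have hfm := hfN (n+N+1) (by omega)
          push_cast
          push_cast at hfm
          nlinarith [ht.le]
        gcongr ?_ * _ / _
      have hS2 : Summable (fun n : ℕ =>
          Real.exp (-t * f (n+N+1)) * z^(n+N+1) / ((n+N+1).factorial : ℝ)) := by
        have := (summable_nat_add_iff
          (f := fun n : ℕ => Real.exp (-t * f (n+1)) * z^(n+1) / (n+1).factorial) N).2 hS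
        beta_reduce at this
        exact this
      have h1 : ∑' n : ℕ, (c*z)^(n+(N+1)) / ((n+(N+1)).factorial : ℝ)
          ≤ ∑' n : ℕ, Real.exp (-t * f (n+N+1)) * z^(n+N+1) / ((n+N+1).factorial : ℝ) :=
        Summable.tsum_le_tsum hterm
          ((summable_nat_add_iff (N+1)).2 (Real.summable_pow_div_factorial _)) hS2
      have h2 := tail_exp (c*z) (N+1)
      have hQz : Q z = ∑ i ∈ Finset.range (N+1), (c*z)^i / i.factorial := rfl
      have hexp0 : 0 ≤ Real.exp (-t * f 0) := (Real.exp_pos _).le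
      simp only [hF]
      linarith
    -- eventually (Q z + exp(a'z)) * exp(-(cz)) < 1
    have hQtend : Tendsto (fun z => Q z * Real.exp (-(c*z))) atTop (nhds 0) := by
      have heq : (fun z => Q z * Real.exp (-(c*z)))
          = fun z => ∑ i ∈ Finset.range (N+1),
              (c*z)^i / (i.factorial : ℝ) * Real.exp (-(c*z)) := by
        funext z
        show (∑ i ∈ Finset.range (N+1), (c*z)^i / (i.factorial:ℝ)) * Real.exp (-(c*z)) = _
        rw [Finset.sum_mul]
      rw [heq]
      have h0 : (0:ℝ) = ∑ i ∈ Finset.range (N+1), (0:ℝ) := by simp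
      rw [h0]
      refine tendsto_finset_sum _ fun i _ => ?_
      have h1 := (tendsto_pow_mul_exp_neg_atTop_nhds_zero i).div_const ((i.factorial : ℝ))
      have h2 : Tendsto (fun z : ℝ => c*z) atTop atTop :=
        Tendsto.const_mul_atTop hcpos tendsto_id
      have h3 := h1.comp h2
      simp only [zero_div] at h3
      have heq2 : ((fun x : ℝ => x^i * Real.exp (-x) / (i.factorial:ℝ)) ∘ fun z : ℝ => c*z)
          = fun z : ℝ => (c*z)^i / (i.factorial:ℝ) * Real.exp (-(c*z)) := by
        funext z; simp [Function.comp, mul_div_right_comm]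
      rwa [heq2] at h3
    have hEtend : Tendsto (fun z => Real.exp (a'*z) * Real.exp (-(c*z))) atTop (nhds 0) := by
      have h2 : Tendsto (fun z : ℝ => (c - a')*z) atTop atTop :=
        Tendsto.const_mul_atTop (by linarith) tendsto_id
      have h3 := Real.tendsto_exp_neg_atTop_nhds_zero.comp h2
      have heq2 : ((fun x : ℝ => Real.exp (-x)) ∘ fun z : ℝ => (c - a')*z)
          = fun z : ℝ => Real.exp (a'*z) * Real.exp (-(c*z)) := by
        funext z
        simp only [Function.comp, ← Real.exp_add]
        congr 1; ring
      rwa [heq2] at h3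
    have hT : Tendsto (fun z => (Q z + Real.exp (a'*z)) * Real.exp (-(c*z)))
        atTop (nhds 0) := by
      have h := hQtend.add hEtend
      simp only [add_zero] at h
      have heq : (fun z => (Q z + Real.exp (a'*z)) * Real.exp (-(c*z)))
          = fun z => Q z * Real.exp (-(c*z)) + Real.exp (a'*z) * Real.exp (-(c*z)) := by
        funext z; ring
      rwa [heq]
    filter_upwards [hT.eventually (eventually_lt_nhds one_pos), eventually_ge_atTop (1:ℝ)]
      with z hz1 hz2
    have hz0 : (0:ℝ) < z := lt_of_lt_of_le one_pos hz2
    have hQE : Q z + Real.exp (a'*z) < Real.exp (c*z) := by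
      have h4 := (lt_div_iff₀ (Real.exp_pos (-(c*z)))).2 hz1
      rwa [one_div, ← Real.exp_neg, neg_neg] at h4
    have hFz : Real.exp (a'*z) < F z :=
      lt_of_lt_of_le (by linarith [hFlow z hz0.le]) (le_refl (F z))
    have h5 : a' * z < Real.log (F z) := (Real.lt_log_iff_exp_lt (hFpos z hz0.le)).2 hFz
    show a' < Real.log (F z) / z
    exact (lt_div_iff₀ hz0).2 h5
  · -- upper bound part
    intro a' ha'
    filter_upwards [eventually_ge_atTop (1:ℝ)] with z hz
    have hz0 : (0:ℝ) < z := lt_of_lt_of_le one_pos hz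
    have h1 : Real.log (F z) ≤ Real.exp (-b*t) * z :=
      (Real.log_le_iff_le_exp (hFpos z hz0.le)).2 (hFle z hz0.le)
    have h2 : Real.log (F z) / z ≤ Real.exp (-b*t) := by
      rw [div_le_iff₀ hz0]; linarith
    show Real.log (F z) / z < a'
    linarith
end

section
/- Let b ≥ 0, t > 0, and let f : ℕ → [0,∞) satisfy f(n) ≥ bn for all n ≥ 1 and f(n)/n → b as n → ∞. Define F_t(z) := e^{−t f(0)} + Σ_{n≥1} e^{−t f(n)} z^n / n! for z ≥ 0. Let 1 < p < q < ∞, set q' := q/(q−1), and assume q > 1 + (p−1) e^{2bt}. Then sup_{τ₁>0, τ₂>0} exp( −((p−1)τ₁² + (q'−1)τ₂²)/4 ) · F_t(τ₁τ₂/2) = +∞. -/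
open MeasureTheory Filter Real

/-- Let b ≥ 0, t > 0 and f : ℕ → [0,∞) with f(n) ≥ bn for n ≥ 1 and
f(n)/n → b, and let `F_t(z) := e^{−t f(0)} + Σ_{n≥1} e^{−t f(n)} z^n/n!`. If 1 < p < q < ∞,
q' = q/(q−1) and q > 1 + (p−1) e^{2bt}, then
`sup_{τ₁,τ₂>0} exp(−((p−1)τ₁² + (q'−1)τ₂²)/4) F_t(τ₁τ₂/2) = +∞`. -/
theorem stmt18 (b t p q : ℝ) (hb : 0 ≤ b) (ht : 0 < t) (f : ℕ → ℝ)
    (hf0 : ∀ n, 0 ≤ f n) (hfb : ∀ n : ℕ, 1 ≤ n → b * n ≤ f n)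
    (hlim : Tendsto (fun n : ℕ => f n / n) atTop (nhds b))
    (hp : 1 < p) (hpq : p < q) (hq : 1 + (p-1) * Real.exp (2*b*t) < q) :
    (⨆ (τ₁ : ℝ) (_ : 0 < τ₁) (τ₂ : ℝ) (_ : 0 < τ₂),
      ((Real.exp (-((p-1)*τ₁^2 + (q/(q-1) - 1)*τ₂^2)/4) *
        (Real.exp (-t * f 0) +
          ∑' n : ℕ, Real.exp (-t * f (n+1)) * (τ₁*τ₂/2)^(n+1) / (n+1).factorial) : ℝ) : EReal))
      = ⊤ := by
  have hq1 : 1 < q := hp.trans hpq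
  set c1 : ℝ := p - 1 with hc1def
  set c2 : ℝ := q / (q - 1) - 1 with hc2def
  have hc1 : 0 < c1 := by simp [hc1def]; linarith
  have hq1' : 0 < q - 1 := by linarith
  have hc2eq : c2 = 1 / (q - 1) := by
    rw [hc2def]; field_simp; ring
  have hc2 : 0 < c2 := by rw [hc2eq]; positivity
  -- c1 * c2 < exp(-(b t))^2
  have hcc : c1 * c2 < Real.exp (-(b*t)) ^ 2 := by
    have h2 : Real.exp (-(b*t)) ^ 2 = (Real.exp (2*b*t))⁻¹ := by
      rw [← Real.exp_nat_mul, ← Real.exp_neg]; ring_nf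
    have hE : 0 < Real.exp (2*b*t) := Real.exp_pos _
    rw [h2, hc2eq, inv_eq_one_div, lt_div_iff₀ hE]
    calc c1 * (1/(q-1)) * Real.exp (2*b*t) = c1 * Real.exp (2*b*t) / (q-1) := by ring
      _ < 1 := by rw [div_lt_one hq1']; linarith [hq]
  -- choose the direction (α, β) and the growth rate s
  obtain ⟨α, β, s, hα, hβ, hspos, hc1α, hc2β, hslt, hs'half⟩ :
      ∃ α β s : ℝ, 0 < α ∧ 0 < β ∧ 0 < s ∧ c1 * α^2 = 1 ∧ c2 * β^2 = 1 ∧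
        s < Real.exp (-(b*t)) ∧ 1/2 < s * (α * β) / 2 := by
    set s0 : ℝ := Real.sqrt (c1 * c2) with hs0def
    have hs0pos : 0 < s0 := Real.sqrt_pos.2 (by positivity)
    have hs0lt : s0 < Real.exp (-(b*t)) := (Real.sqrt_lt' (Real.exp_pos _)).2 hcc
    have hsc1 : (0:ℝ) < Real.sqrt c1 := Real.sqrt_pos.2 hc1
    have hsc2 : (0:ℝ) < Real.sqrt c2 := Real.sqrt_pos.2 hc2
    refine ⟨(Real.sqrt c1)⁻¹, (Real.sqrt c2)⁻¹, (s0 + Real.exp (-(b*t)))/2,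
      by positivity, by positivity, by positivity, ?_, ?_, by linarith, ?_⟩
    · rw [inv_pow, Real.sq_sqrt hc1.le, mul_inv_cancel₀ hc1.ne']
    · rw [inv_pow, Real.sq_sqrt hc2.le, mul_inv_cancel₀ hc2.ne']
    · have hαβ : (Real.sqrt c1)⁻¹ * (Real.sqrt c2)⁻¹ = s0⁻¹ := by
        rw [hs0def, Real.sqrt_mul hc1.le, mul_inv]
      rw [hαβ]
      have h8 : 1 < (s0 + Real.exp (-(b*t)))/2 * s0⁻¹ := by
        rw [← div_eq_mul_inv, one_lt_div hs0pos]
        linarith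
      linarith
  -- exp(-t f n) ≥ s^n eventually
  have hlogs : Real.log s < -(b*t) := by
    calc Real.log s < Real.log (Real.exp (-(b*t))) := Real.log_lt_log hspos hslt
      _ = -(b*t) := Real.log_exp _
  obtain ⟨b', hb'def, hbb'⟩ : ∃ b' : ℝ, b' = -Real.log s / t ∧ b < b' := by
    refine ⟨_, rfl, ?_⟩
    rw [lt_div_iff₀ ht]; nlinarith
  obtain ⟨N₀, hN₀⟩ : ∃ N₀ : ℕ, ∀ n ≥ N₀, f n / n < b' :=
    eventually_atTop.1 (hlim.eventually (gt_mem_nhds hbb'))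
  set N : ℕ := N₀ + 1 with hNdef
  have hkey : ∀ n : ℕ, N ≤ n → s ^ n ≤ Real.exp (-t * f n) := by
    intro n hn
    have hn1 : (1:ℝ) ≤ (n:ℝ) := by exact_mod_cast Nat.one_le_iff_ne_zero.2 (by omega)
    have hnpos : (0:ℝ) < n := by linarith
    have h1 : f n / n < b' := hN₀ n (by omega)
    have h2 : f n < b' * n := by rwa [div_lt_iff₀ hnpos] at h1
    have h3 : (n:ℝ) * Real.log s ≤ -t * f n := by
      have : t * b' = -Real.log s := by rw [hb'def]; field_simp
      nlinarith [ht]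
    calc s ^ n = Real.exp (Real.log s) ^ n := by rw [Real.exp_log hspos]
      _ = Real.exp ((n:ℝ) * Real.log s) := (Real.exp_nat_mul _ n).symm
      _ ≤ Real.exp (-t * f n) := Real.exp_le_exp.2 h3
  obtain ⟨s', hs'def, hs'h⟩ : ∃ s' : ℝ, s' = s * (α * β) / 2 ∧ 1/2 < s' :=
    ⟨_, rfl, hs'half⟩
  have hs'pos : 0 < s' := by linarith
  obtain ⟨δ, hδdef, hδ⟩ : ∃ δ : ℝ, δ = s' - 1/2 ∧ 0 < δ := ⟨_, rfl, by linarith⟩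
  set Q : ℝ → ℝ := fun y => ∑ i ∈ Finset.range N, (s' * y) ^ i / i.factorial with hQdef
  -- the lower-bound function tends to infinity
  have hG : Tendsto (fun y => Real.exp (δ * y) - Q y) atTop atTop := by
    have h0 : Tendsto (fun y => Q y * Real.exp (-(δ * y))) atTop (nhds 0) := by
      have hterm : ∀ i ∈ Finset.range N, Tendsto
          (fun y => (s' * y) ^ i / (i.factorial : ℝ) * Real.exp (-(δ * y))) atTop (nhds 0) := by
        intro i _
        have hcomp : Tendsto (fun y : ℝ => (δ * y) ^ i * Real.exp (-(δ * y))) atTop (nhds 0) :=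
          (tendsto_pow_mul_exp_neg_atTop_nhds_zero i).comp
            (Tendsto.const_mul_atTop hδ tendsto_id)
        have h4 := hcomp.const_mul (s' ^ i / (i.factorial : ℝ) / δ ^ i)
        rw [mul_zero] at h4
        refine h4.congr fun y => ?_
        have hfac : (0:ℝ) < i.factorial := by exact_mod_cast i.factorial_pos
        rw [mul_pow, mul_pow]
        field_simp
      have h5 := tendsto_finset_sum (Finset.range N) hterm
      rw [Finset.sum_const_zero] at h5
      refine h5.congr fun y => ?_
      rw [hQdef, Finset.sum_mul]
    have h1 : Tendsto (fun y => (1 : ℝ) - Q y * Real.exp (-(δ * y))) atTop (nhds 1) := by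
      simpa using tendsto_const_nhds.sub h0
    have h2 : Tendsto (fun y : ℝ => Real.exp (δ * y)) atTop atTop :=
      Real.tendsto_exp_atTop.comp (Tendsto.const_mul_atTop hδ tendsto_id)
    have h3 := h2.atTop_mul_pos one_pos h1
    refine h3.congr fun y => ?_
    rw [mul_sub, mul_one]
    congr 1
    rw [mul_comm (Q y) _, ← mul_assoc, ← Real.exp_add, add_neg_cancel, Real.exp_zero, one_mul]
  -- the main pointwise lower bound
  have hmain : ∀ r : ℝ, 0 < r →
      Real.exp (δ * r^2) - Q (r^2) ≤
      Real.exp (-(c1*(α*r)^2 + c2*(β*r)^2)/4) *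
        (Real.exp (-t * f 0) +
          ∑' n : ℕ, Real.exp (-t * f (n+1)) * ((α*r)*(β*r)/2)^(n+1) / (n+1).factorial) := by
    intro r hr
    obtain ⟨z, hzdef, hz⟩ : ∃ z : ℝ, z = (α*r)*(β*r)/2 ∧ 0 ≤ z :=
      ⟨_, rfl, by positivity⟩
    have hsz : s * z = s' * r^2 := by rw [hzdef, hs'def]; ring
    set a : ℕ → ℝ := fun m => Real.exp (-t * f m) * z^m / m.factorial with hadef
    set g : ℕ → ℝ := fun m => (s*z)^m / m.factorial with hgdef
    have ha0 : ∀ m, 0 ≤ a m := fun m => by rw [hadef]; positivity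
    have hg0 : ∀ m, 0 ≤ g m := fun m => by rw [hgdef]; positivity
    have ha : Summable a := by
      refine Summable.of_nonneg_of_le ha0 (fun m => ?_) (Real.summable_pow_div_factorial z)
      have h1 : Real.exp (-t * f m) ≤ 1 := by
        rw [Real.exp_le_one_iff, neg_mul, neg_nonpos]
        exact mul_nonneg ht.le (hf0 m)
      calc a m = Real.exp (-t * f m) * (z^m / m.factorial) := by rw [hadef]; ring
        _ ≤ 1 * (z^m / m.factorial) := by
            apply mul_le_mul_of_nonneg_right h1; positivity
        _ = z^m / m.factorial := one_mul _
    have hg : Summable g := Real.summable_pow_div_factorial (s*z)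
    have hsa : Summable (fun n => a (n+1)) := (summable_nat_add_iff 1).2 ha
    have hexp : Real.exp (s*z) = ∑' n : ℕ, g n := by
      rw [Real.exp_eq_exp_ℝ, NormedSpace.exp_eq_tsum_div]
    -- step 1 : drop initial terms
    have step1 : ∑' k : ℕ, a (k + N) ≤ ∑' n : ℕ, a (n+1) := by
      have e := Summable.sum_add_tsum_nat_add N₀ hsa
      have e2 : (∑' k : ℕ, a (k + N₀ + 1)) = ∑' k : ℕ, a (k + N) := by
        refine tsum_congr fun k => ?_
        rw [hNdef, ← add_assoc]
      have hfin : 0 ≤ ∑ i ∈ Finset.range N₀, a (i + 1) :=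
        Finset.sum_nonneg fun i _ => ha0 _
      rw [e2] at e
      linarith
    -- step 2 : termwise comparison with the exponential series
    have step2 : ∑' k : ℕ, g (k + N) ≤ ∑' k : ℕ, a (k + N) := by
      refine Summable.tsum_le_tsum (fun k => ?_) ((summable_nat_add_iff N).2 hg)
        ((summable_nat_add_iff N).2 ha)
      rw [hadef, hgdef]
      simp only []
      rw [mul_pow]
      have hfac : (0:ℝ) < (k+N).factorial := by exact_mod_cast (k+N).factorial_pos
      have hkN : s ^ (k+N) ≤ Real.exp (-t * f (k+N)) := hkey (k+N) (Nat.le_add_left N k)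
      have h9 : s ^ (k+N) * z^(k+N) ≤ Real.exp (-t * f (k+N)) * z^(k+N) :=
        mul_le_mul_of_nonneg_right hkN (by positivity)
      exact div_le_div_of_nonneg_right h9 hfac.le
    -- step 3 : sum up the tail of the exponential series
    have step3 : Real.exp (s*z) - ∑ i ∈ Finset.range N, g i = ∑' k : ℕ, g (k + N) := by
      have e := Summable.sum_add_tsum_nat_add N hg
      rw [← hexp] at e
      linarith
    have hQr : (∑ i ∈ Finset.range N, g i) = Q (r^2) := by
      rw [hQdef, hgdef]
      exact Finset.sum_congr rfl fun i _ => by rw [hsz]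
    have hS : Real.exp (s*z) - Q (r^2) ≤ ∑' n : ℕ, a (n+1) := by
      rw [← hQr]; linarith
    -- put it together
    have hpre : -(c1*(α*r)^2 + c2*(β*r)^2)/4 = -(r^2)/2 := by
      have e1 : c1*(α*r)^2 = r^2 := by
        calc c1*(α*r)^2 = c1 * α^2 * r^2 := by ring
          _ = r^2 := by rw [hc1α, one_mul]
      have e2 : c2*(β*r)^2 = r^2 := by
        calc c2*(β*r)^2 = c2 * β^2 * r^2 := by ring
          _ = r^2 := by rw [hc2β, one_mul]
      rw [e1, e2]; ring
    have hsum_eq : (∑' n : ℕ, Real.exp (-t * f (n+1)) * ((α*r)*(β*r)/2)^(n+1) / (n+1).factorial)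
        = ∑' n : ℕ, a (n+1) := by
      refine tsum_congr fun n => ?_
      rw [hadef, hzdef]
    rw [hpre, hsum_eq]
    have hE1 : Real.exp (-(r^2)/2) ≤ 1 := by
      rw [Real.exp_le_one_iff]
      have := sq_nonneg r
      linarith
    have hQ0 : 0 ≤ Q (r^2) := by
      rw [hQdef]
      refine Finset.sum_nonneg fun i _ => ?_
      have h6 : (0:ℝ) ≤ s' * r^2 := by positivity
      positivity
    have hEE : Real.exp (-(r^2)/2) * Real.exp (s*z) = Real.exp (δ * r^2) := by
      rw [← Real.exp_add, hsz, hδdef]; ring_nf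
    calc Real.exp (δ * r^2) - Q (r^2)
        ≤ Real.exp (δ * r^2) - Real.exp (-(r^2)/2) * Q (r^2) := by
          have h10 : Real.exp (-(r^2)/2) * Q (r^2) ≤ 1 * Q (r^2) :=
            mul_le_mul_of_nonneg_right hE1 hQ0
          rw [one_mul] at h10
          linarith
      _ = Real.exp (-(r^2)/2) * (Real.exp (s*z) - Q (r^2)) := by
          rw [mul_sub, hEE]
      _ ≤ Real.exp (-(r^2)/2) * (Real.exp (-t * f 0) + ∑' n : ℕ, a (n+1)) := by
          apply mul_le_mul_of_nonneg_left ?_ (Real.exp_pos _).le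
          have := Real.exp_pos (-t * f 0)
          linarith
  -- conclude : the supremum is infinite
  rw [iSup_eq_top]
  intro x hx
  obtain ⟨M, hxM, -⟩ := EReal.exists_between_coe_real hx
  obtain ⟨y₀, hy₀⟩ := eventually_atTop.1 (hG.eventually_gt_atTop M)
  obtain ⟨y, hyy₀, hypos⟩ : ∃ y : ℝ, y₀ ≤ y ∧ 0 < y :=
    ⟨max y₀ 1, le_max_left _ _, lt_of_lt_of_le one_pos (le_max_right _ _)⟩
  obtain ⟨r, hr, hr2⟩ : ∃ r : ℝ, 0 < r ∧ r^2 = y :=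
    ⟨Real.sqrt y, Real.sqrt_pos.2 hypos, Real.sq_sqrt hypos.le⟩
  have hMG : M < Real.exp (δ * r^2) - Q (r^2) := by
    rw [hr2]; exact hy₀ y hyy₀
  refine ⟨α*r, ?_⟩
  rw [iSup_pos (by positivity : (0:ℝ) < α*r)]
  refine lt_iSup_iff.2 ⟨β*r, ?_⟩
  rw [iSup_pos (by positivity : (0:ℝ) < β*r)]
  refine hxM.trans ?_
  have hfin := (hmain r hr).trans_lt' hMG
  exact_mod_cast EReal.coe_lt_coe_iff.2 hfin
end
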